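/- Suppose z₁,…,z₆ : ℝ → ℂ³ are differentiable functions satisfying at t = 0 the constraints ω(z₂,z₃) = ω(z₁,z₃) = ω(z₁,z₂) = 0, ω(z₁,z₅) + ω(z₂,z₅) − ω(z₃,z₄) = 0, −ω(z₁,z₄) + ω(z₂,z₄) + ω(z₃,z₅) = 0, ω(z₄,z₅) = 0, and satisfying for all t ∈ ℝ the evolution equations dz₁/dt = 2 z₂×z₃, dz₂/dt = 2 z₁×z₃, dz₃/dt = −2 z₁×z₂, dz₄/dt = z₁×z₅ + z₂×z₅ − z₃×z₄, dz₅/dt = −z₁×z₄ + z₂×z₄ + z₃×z₅, dz₆/dt = z₄×z₅. Define Φ : ℝ³ → ℂ³ by Φ(y₁,y₂,t) = ½(y₁²+y₂²)z₁(t) + ½(y₁²−y₂²)z₂(t) + y₁y₂ z₃(t) + y₁ z₄(t) + y₂ z₅(t) + z₆(t). Then at every point (y₁,y₂,t) ∈ ℝ³ one has ω(∂Φ/∂y₁, ∂Φ/∂y₂) = ω(∂Φ/∂y₁, ∂Φ/∂t) = ω(∂Φ/∂y₂, ∂Φ/∂t) = 0 and Im Ω(∂Φ/∂y₁, ∂Φ/∂y₂,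 ∂Φ/∂t) = 0; that is, the image N = Φ(ℝ³) is a special Lagrangian 3-fold in ℂ³ wherever it is nonsingular. -/

import Mathlib

noncomputable section

open Complex ComplexConjugate

/-- ℂ³ as triples of complex numbers. -/
abbrev C3 := ℂ × ℂ × ℂ

/-- The standard Kähler form ω(u,v) = Σ Im(conj(u_j)·v_j). -/
def omega3 (u v : C3) : ℝ :=
  (conj u.1 * v.1).im + (conj u.2.1 * v.2.1).im + (conj u.2.2 * v.2.2).im

/-- The antibilinear cross product on ℂ³. -/
def cross3 (u v : C3) : C3 :=
  ((1/2 : ℂ) * conj (u.2.1 * v.2.2 - u.2.2 * v.2.1),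
   (1/2 : ℂ) * conj (u.2.2 * v.1 - u.1 * v.2.2),
   (1/2 : ℂ) * conj (u.1 * v.2.1 - u.2.1 * v.1))

/-- The holomorphic volume form Ω(u,v,w): determinant of the matrix with columns u,v,w. -/
def Omega3 (u v w : C3) : ℂ :=
  u.1 * (v.2.1 * w.2.2 - v.2.2 * w.2.1)
  - v.1 * (u.2.1 * w.2.2 - u.2.2 * w.2.1)
  + w.1 * (u.2.1 * v.2.2 - u.2.2 * v.2.1)

/-- The map Φ(y₁,y₂,t) = ½(y₁²+y₂²)z₁(t) + ½(y₁²−y₂²)z₂(t) + y₁y₂ z₃(t)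
    + y₁ z₄(t) + y₂ z₅(t) + z₆(t). -/
def PhiMap (z₁ z₂ z₃ z₄ z₅ z₆ : ℝ → C3) (y₁ y₂ t : ℝ) : C3 :=
  ((1/2 : ℝ) * (y₁^2 + y₂^2)) • z₁ t + ((1/2 : ℝ) * (y₁^2 - y₂^2)) • z₂ t
  + (y₁ * y₂) • z₃ t + y₁ • z₄ t + y₂ • z₅ t + z₆ t

/- ### Auxiliary lemmas -/

lemma omega3_eq (u v : C3) : omega3 u v =
    u.1.re*v.1.im - u.1.im*v.1.re + (u.2.1.re*v.2.1.im - u.2.1.im*v.2.1.re)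
    + (u.2.2.re*v.2.2.im - u.2.2.im*v.2.2.re) := by
  simp [omega3, Complex.mul_im]; ring

lemma hasDerivAt_comp_re' {f : ℝ → ℂ} {f' : ℂ} {t : ℝ} (hf : HasDerivAt f f' t) :
    HasDerivAt (fun s => (f s).re) f'.re t :=
  Complex.reCLM.hasFDerivAt.comp_hasDerivAt t hf

lemma hasDerivAt_comp_im' {f : ℝ → ℂ} {f' : ℂ} {t : ℝ} (hf : HasDerivAt f f' t) :
    HasDerivAt (fun s => (f s).im) f'.im t :=
  Complex.imCLM.hasFDerivAt.comp_hasDerivAt t hf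

lemma hasDerivAt_omega3 {f g : ℝ → C3} {f' g' : C3} {t : ℝ}
    (hf : HasDerivAt f f' t) (hg : HasDerivAt g g' t) :
    HasDerivAt (fun s => omega3 (f s) (g s))
      (omega3 f' (g t) + omega3 (f t) g') t := by
  have hf2 : HasDerivAt (fun s => (f s).2) f'.2 t :=
    (ContinuousLinearMap.snd ℝ ℂ (ℂ × ℂ)).hasFDerivAt.comp_hasDerivAt t hf
  have hg2 : HasDerivAt (fun s => (g s).2) g'.2 t :=
    (ContinuousLinearMap.snd ℝ ℂ (ℂ × ℂ)).hasFDerivAt.comp_hasDerivAt t hg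
  have hf1 : HasDerivAt (fun s => (f s).1) f'.1 t :=
    (ContinuousLinearMap.fst ℝ ℂ (ℂ × ℂ)).hasFDerivAt.comp_hasDerivAt t hf
  have hf21 : HasDerivAt (fun s => (f s).2.1) f'.2.1 t :=
    (ContinuousLinearMap.fst ℝ ℂ ℂ).hasFDerivAt.comp_hasDerivAt t hf2
  have hf22 : HasDerivAt (fun s => (f s).2.2) f'.2.2 t :=
    (ContinuousLinearMap.snd ℝ ℂ ℂ).hasFDerivAt.comp_hasDerivAt t hf2
  have hg1 : HasDerivAt (fun s => (g s).1) g'.1 t :=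
    (ContinuousLinearMap.fst ℝ ℂ (ℂ × ℂ)).hasFDerivAt.comp_hasDerivAt t hg
  have hg21 : HasDerivAt (fun s => (g s).2.1) g'.2.1 t :=
    (ContinuousLinearMap.fst ℝ ℂ ℂ).hasFDerivAt.comp_hasDerivAt t hg2
  have hg22 : HasDerivAt (fun s => (g s).2.2) g'.2.2 t :=
    (ContinuousLinearMap.snd ℝ ℂ ℂ).hasFDerivAt.comp_hasDerivAt t hg2
  have H := ((((hasDerivAt_comp_re' hf1).mul (hasDerivAt_comp_im' hg1)).sub
      ((hasDerivAt_comp_im' hf1).mul (hasDerivAt_comp_re' hg1))).add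
      (((hasDerivAt_comp_re' hf21).mul (hasDerivAt_comp_im' hg21)).sub
      ((hasDerivAt_comp_im' hf21).mul (hasDerivAt_comp_re' hg21)))).add
      (((hasDerivAt_comp_re' hf22).mul (hasDerivAt_comp_im' hg22)).sub
      ((hasDerivAt_comp_im' hf22).mul (hasDerivAt_comp_re' hg22)))
  have heq : (fun s => omega3 (f s) (g s)) = fun s =>
      (f s).1.re*(g s).1.im - (f s).1.im*(g s).1.re
      + ((f s).2.1.re*(g s).2.1.im - (f s).2.1.im*(g s).2.1.re)
      + ((f s).2.2.re*(g s).2.2.im - (f s).2.2.im*(g s).2.2.re) := by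
    funext s; exact omega3_eq _ _
  rw [heq]
  refine H.congr_deriv ?_
  rw [omega3_eq, omega3_eq]; ring

lemma constant_of_hasDerivAt_zero {g : ℝ → ℝ} (h : ∀ t, HasDerivAt g 0 t) (t : ℝ) :
    g t = g 0 :=
  is_const_of_deriv_eq_zero (fun x => (h x).differentiableAt) (fun x => (h x).deriv) t 0

/-- Bilinear expansion of ω on the tangent vectors. -/
lemma omega3_tangent (a b c d e : C3) (y₁ y₂ : ℝ) :
    omega3 (y₁ • a + y₁ • b + y₂ • c + d) (y₂ • a - y₂ • b + y₁ • c + e)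
    = (y₁^2 + y₂^2) * omega3 b c + (y₁^2 - y₂^2) * omega3 a c
      - 2*y₁*y₂ * omega3 a b
      + y₁ * (omega3 a e + omega3 b e - omega3 c d)
      + y₂ * (-omega3 a d + omega3 b d + omega3 c e)
      + omega3 d e := by
  simp only [omega3_eq, Prod.smul_fst, Prod.smul_snd, Prod.fst_add, Prod.snd_add,
    Prod.fst_sub, Prod.snd_sub, Complex.real_smul, Complex.add_re, Complex.add_im,
    Complex.sub_re, Complex.sub_im, Complex.mul_re, Complex.mul_im,
    Complex.ofReal_re, Complex.ofReal_im]
  ring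

/-- The t-derivative of Φ equals the cross product of the two y-derivatives. -/
lemma cross3_tangent (a b c d e : C3) (y₁ y₂ : ℝ) :
    ((1/2 : ℝ) * (y₁^2 + y₂^2)) • ((2:ℝ) • cross3 b c)
    + ((1/2 : ℝ) * (y₁^2 - y₂^2)) • ((2:ℝ) • cross3 a c)
    + (y₁ * y₂) • ((-2:ℝ) • cross3 a b)
    + y₁ • (cross3 a e + cross3 b e - cross3 c d)
    + y₂ • (-(cross3 a d) + cross3 b d + cross3 c e)
    + cross3 d e
    = cross3 (y₁ • a + y₁ • b + y₂ • c + d) (y₂ • a - y₂ • b + y₁ • c + e) := by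
  refine Prod.ext ?_ (Prod.ext ?_ ?_) <;>
  · simp only [cross3, Prod.smul_fst, Prod.smul_snd, Prod.fst_add, Prod.snd_add,
      Prod.fst_sub, Prod.snd_sub, Prod.fst_neg, Prod.snd_neg, Complex.real_smul,
      map_sub, map_add, map_mul, Complex.conj_ofReal]
    push_cast
    ring

lemma omega3_cross_left (u v : C3) : omega3 u (cross3 u v) = 0 := by
  simp [omega3_eq, cross3, Complex.mul_im, Complex.mul_re, Complex.sub_im, Complex.sub_re]
  ring

lemma omega3_cross_right (u v : C3) : omega3 v (cross3 u v) = 0 := by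
  simp [omega3_eq, cross3, Complex.mul_im, Complex.mul_re, Complex.sub_im, Complex.sub_re]
  ring

lemma Omega3_cross_im (u v : C3) : (Omega3 u v (cross3 u v)).im = 0 := by
  simp [cross3, Omega3, Complex.mul_im, Complex.mul_re, Complex.sub_im, Complex.sub_re,
    Complex.add_im, Complex.add_re]
  ring

/- derivative-vanishing algebra for the six constraint quantities -/

lemma galg1 (a b c : C3) :
    omega3 ((2:ℝ) • cross3 a c) c + omega3 b ((-2:ℝ) • cross3 a b) = 0 := by
  simp [omega3_eq, cross3, Prod.smul_fst, Prod.smul_snd, Complex.real_smul,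
    Complex.mul_im, Complex.mul_re, Complex.sub_im, Complex.sub_re,
    Complex.ofReal_re, Complex.ofReal_im]
  ring

lemma galg2 (a b c : C3) :
    omega3 ((2:ℝ) • cross3 b c) c + omega3 a ((-2:ℝ) • cross3 a b) = 0 := by
  simp [omega3_eq, cross3, Prod.smul_fst, Prod.smul_snd, Complex.real_smul,
    Complex.mul_im, Complex.mul_re, Complex.sub_im, Complex.sub_re,
    Complex.ofReal_re, Complex.ofReal_im]
  ring

lemma galg3 (a b c : C3) :
    omega3 ((2:ℝ) • cross3 b c) b + omega3 a ((2:ℝ) • cross3 a c) = 0 := by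
  simp [omega3_eq, cross3, Prod.smul_fst, Prod.smul_snd, Complex.real_smul,
    Complex.mul_im, Complex.mul_re, Complex.sub_im, Complex.sub_re,
    Complex.ofReal_re, Complex.ofReal_im]
  ring

lemma galg4 (a b c d e : C3) :
    omega3 ((2:ℝ) • cross3 b c) e
      + omega3 a (-(cross3 a d) + cross3 b d + cross3 c e)
    + (omega3 ((2:ℝ) • cross3 a c) e
      + omega3 b (-(cross3 a d) + cross3 b d + cross3 c e))
    - (omega3 ((-2:ℝ) • cross3 a b) d
      + omega3 c (cross3 a e + cross3 b e - cross3 c d)) = 0 := by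
  simp [omega3_eq, cross3, Prod.smul_fst, Prod.smul_snd, Prod.fst_add, Prod.snd_add,
    Prod.fst_sub, Prod.snd_sub, Prod.fst_neg, Prod.snd_neg, Complex.real_smul,
    Complex.mul_im, Complex.mul_re, Complex.sub_im, Complex.sub_re,
    Complex.add_im, Complex.add_re, Complex.neg_im, Complex.neg_re,
    Complex.ofReal_re, Complex.ofReal_im]
  ring

lemma galg5 (a b c d e : C3) :
    -(omega3 ((2:ℝ) • cross3 b c) d
      + omega3 a (cross3 a e + cross3 b e - cross3 c d))
    + (omega3 ((2:ℝ) • cross3 a c) d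
      + omega3 b (cross3 a e + cross3 b e - cross3 c d))
    + (omega3 ((-2:ℝ) • cross3 a b) e
      + omega3 c (-(cross3 a d) + cross3 b d + cross3 c e)) = 0 := by
  simp [omega3_eq, cross3, Prod.smul_fst, Prod.smul_snd, Prod.fst_add, Prod.snd_add,
    Prod.fst_sub, Prod.snd_sub, Prod.fst_neg, Prod.snd_neg, Complex.real_smul,
    Complex.mul_im, Complex.mul_re, Complex.sub_im, Complex.sub_re,
    Complex.add_im, Complex.add_re, Complex.neg_im, Complex.neg_re,
    Complex.ofReal_re, Complex.ofReal_im]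
  ring

lemma galg6 (a b c d e : C3) :
    omega3 (cross3 a e + cross3 b e - cross3 c d) e
      + omega3 d (-(cross3 a d) + cross3 b d + cross3 c e) = 0 := by
  simp [omega3_eq, cross3, Prod.fst_add, Prod.snd_add,
    Prod.fst_sub, Prod.snd_sub, Prod.fst_neg, Prod.snd_neg,
    Complex.mul_im, Complex.mul_re, Complex.sub_im, Complex.sub_re,
    Complex.add_im, Complex.add_re, Complex.neg_im, Complex.neg_re]
  ring

theorem statement_0
    (z₁ z₂ z₃ z₄ z₅ z₆ : ℝ → C3)
    (hc1 : omega3 (z₂ 0) (z₃ 0) = 0)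
    (hc2 : omega3 (z₁ 0) (z₃ 0) = 0)
    (hc3 : omega3 (z₁ 0) (z₂ 0) = 0)
    (hc4 : omega3 (z₁ 0) (z₅ 0) + omega3 (z₂ 0) (z₅ 0) - omega3 (z₃ 0) (z₄ 0) = 0)
    (hc5 : -omega3 (z₁ 0) (z₄ 0) + omega3 (z₂ 0) (z₄ 0) + omega3 (z₃ 0) (z₅ 0) = 0)
    (hc6 : omega3 (z₄ 0) (z₅ 0) = 0)
    (hz1 : ∀ t : ℝ, HasDerivAt z₁ ((2:ℝ) • cross3 (z₂ t) (z₃ t)) t)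
    (hz2 : ∀ t : ℝ, HasDerivAt z₂ ((2:ℝ) • cross3 (z₁ t) (z₃ t)) t)
    (hz3 : ∀ t : ℝ, HasDerivAt z₃ ((-2:ℝ) • cross3 (z₁ t) (z₂ t)) t)
    (hz4 : ∀ t : ℝ, HasDerivAt z₄
      (cross3 (z₁ t) (z₅ t) + cross3 (z₂ t) (z₅ t) - cross3 (z₃ t) (z₄ t)) t)
    (hz5 : ∀ t : ℝ, HasDerivAt z₅
      (-cross3 (z₁ t) (z₄ t) + cross3 (z₂ t) (z₄ t) + cross3 (z₃ t) (z₅ t)) t)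
    (hz6 : ∀ t : ℝ, HasDerivAt z₆ (cross3 (z₄ t) (z₅ t)) t) :
    ∀ y₁ y₂ t : ℝ,
      omega3 (deriv (fun s => PhiMap z₁ z₂ z₃ z₄ z₅ z₆ s y₂ t) y₁)
             (deriv (fun s => PhiMap z₁ z₂ z₃ z₄ z₅ z₆ y₁ s t) y₂) = 0 ∧
      omega3 (deriv (fun s => PhiMap z₁ z₂ z₃ z₄ z₅ z₆ s y₂ t) y₁)
             (deriv (fun s => PhiMap z₁ z₂ z₃ z₄ z₅ z₆ y₁ y₂ s) t) = 0 ∧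
      omega3 (deriv (fun s => PhiMap z₁ z₂ z₃ z₄ z₅ z₆ y₁ s t) y₂)
             (deriv (fun s => PhiMap z₁ z₂ z₃ z₄ z₅ z₆ y₁ y₂ s) t) = 0 ∧
      (Omega3 (deriv (fun s => PhiMap z₁ z₂ z₃ z₄ z₅ z₆ s y₂ t) y₁)
              (deriv (fun s => PhiMap z₁ z₂ z₃ z₄ z₅ z₆ y₁ s t) y₂)
              (deriv (fun s => PhiMap z₁ z₂ z₃ z₄ z₅ z₆ y₁ y₂ s) t)).im = 0 := by
  intro y₁ y₂ t
  -- tangent vectors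
  set U : C3 := y₁ • z₁ t + y₁ • z₂ t + y₂ • z₃ t + z₄ t with hUdef
  set V : C3 := y₂ • z₁ t - y₂ • z₂ t + y₁ • z₃ t + z₅ t with hVdef
  -- derivative in y₁
  have hU : HasDerivAt (fun s => PhiMap z₁ z₂ z₃ z₄ z₅ z₆ s y₂ t) U y₁ := by
    have h1 : HasDerivAt (fun s : ℝ => (1/2 : ℝ) * (s^2 + y₂^2)) y₁ y₁ := by
      have := (((hasDerivAt_pow 2 y₁).add_const (y₂^2)).const_mul (1/2 : ℝ))
      refine this.congr_deriv ?_; push_cast; ring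
    have h2 : HasDerivAt (fun s : ℝ => (1/2 : ℝ) * (s^2 - y₂^2)) y₁ y₁ := by
      have := (((hasDerivAt_pow 2 y₁).sub_const (y₂^2)).const_mul (1/2 : ℝ))
      refine this.congr_deriv ?_; push_cast; ring
    have h3 : HasDerivAt (fun s : ℝ => s * y₂) y₂ y₁ := by
      simpa using (hasDerivAt_id y₁).mul_const y₂
    have H1 := ((h1.smul_const (z₁ t)).add (h2.smul_const (z₂ t))).add (h3.smul_const (z₃ t))
    have H2 := (H1.add ((hasDerivAt_id y₁).smul_const (z₄ t))).add_const (y₂ • z₅ t)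
    have H := H2.add_const (z₆ t)
    simp only [PhiMap]
    refine H.congr_deriv ?_
    rw [hUdef]; module
  -- derivative in y₂
  have hV : HasDerivAt (fun s => PhiMap z₁ z₂ z₃ z₄ z₅ z₆ y₁ s t) V y₂ := by
    have h1 : HasDerivAt (fun s : ℝ => (1/2 : ℝ) * (y₁^2 + s^2)) y₂ y₂ := by
      have := (((hasDerivAt_pow 2 y₂).const_add (y₁^2)).const_mul (1/2 : ℝ))
      refine this.congr_deriv ?_; push_cast; ring
    have h2 : HasDerivAt (fun s : ℝ => (1/2 : ℝ) * (y₁^2 - s^2)) (-y₂) y₂ := by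
      have := ((((hasDerivAt_pow 2 y₂).neg).const_add (y₁^2)).const_mul (1/2 : ℝ))
      have e : (fun s : ℝ => (1/2 : ℝ) * (y₁^2 - s^2)) =
          fun s : ℝ => (1/2 : ℝ) * (y₁^2 + -(s^2)) := by funext s; ring
      rw [e]; refine this.congr_deriv ?_; push_cast; ring
    have h3 : HasDerivAt (fun s : ℝ => y₁ * s) y₁ y₂ := by
      simpa using (hasDerivAt_id y₂).const_mul y₁
    have H1 := ((h1.smul_const (z₁ t)).add (h2.smul_const (z₂ t))).add (h3.smul_const (z₃ t))
    have H2 := (H1.add_const (y₁ • z₄ t)).add ((hasDerivAt_id y₂).smul_const (z₅ t))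
    have H := H2.add_const (z₆ t)
    simp only [PhiMap]
    refine H.congr_deriv ?_
    rw [hVdef]; module
  -- derivative in t
  have hT : HasDerivAt (fun s => PhiMap z₁ z₂ z₃ z₄ z₅ z₆ y₁ y₂ s) (cross3 U V) t := by
    have H1 := (((hz1 t).const_smul ((1/2 : ℝ) * (y₁^2 + y₂^2))).add
        ((hz2 t).const_smul ((1/2 : ℝ) * (y₁^2 - y₂^2)))).add ((hz3 t).const_smul (y₁ * y₂))
    have H2 := (H1.add ((hz4 t).const_smul y₁)).add ((hz5 t).const_smul y₂)
    have H := H2.add (hz6 t)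
    simp only [PhiMap]
    refine H.congr_deriv ?_
    rw [hUdef, hVdef, ← cross3_tangent (z₁ t) (z₂ t) (z₃ t) (z₄ t) (z₅ t) y₁ y₂]
  have hdU : deriv (fun s => PhiMap z₁ z₂ z₃ z₄ z₅ z₆ s y₂ t) y₁ = U := hU.deriv
  have hdV : deriv (fun s => PhiMap z₁ z₂ z₃ z₄ z₅ z₆ y₁ s t) y₂ = V := hV.deriv
  have hdT : deriv (fun s => PhiMap z₁ z₂ z₃ z₄ z₅ z₆ y₁ y₂ s) t = cross3 U V := hT.deriv
  -- the six conserved quantities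
  have hg1 : omega3 (z₂ t) (z₃ t) = 0 := by
    have h : ∀ s, HasDerivAt (fun r => omega3 (z₂ r) (z₃ r)) 0 s := by
      intro s
      have := hasDerivAt_omega3 (hz2 s) (hz3 s)
      rwa [galg1 (z₁ s) (z₂ s) (z₃ s)] at this
    rw [constant_of_hasDerivAt_zero h t]; exact hc1
  have hg2 : omega3 (z₁ t) (z₃ t) = 0 := by
    have h : ∀ s, HasDerivAt (fun r => omega3 (z₁ r) (z₃ r)) 0 s := by
      intro s
      have := hasDerivAt_omega3 (hz1 s) (hz3 s)
      rwa [galg2 (z₁ s) (z₂ s) (z₃ s)] at this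
    rw [constant_of_hasDerivAt_zero h t]; exact hc2
  have hg3 : omega3 (z₁ t) (z₂ t) = 0 := by
    have h : ∀ s, HasDerivAt (fun r => omega3 (z₁ r) (z₂ r)) 0 s := by
      intro s
      have := hasDerivAt_omega3 (hz1 s) (hz2 s)
      rwa [galg3 (z₁ s) (z₂ s) (z₃ s)] at this
    rw [constant_of_hasDerivAt_zero h t]; exact hc3
  have hg4 : omega3 (z₁ t) (z₅ t) + omega3 (z₂ t) (z₅ t) - omega3 (z₃ t) (z₄ t) = 0 := by
    have h : ∀ s, HasDerivAt
        (fun r => omega3 (z₁ r) (z₅ r) + omega3 (z₂ r) (z₅ r) - omega3 (z₃ r) (z₄ r)) 0 s := by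
      intro s
      have H := ((hasDerivAt_omega3 (hz1 s) (hz5 s)).add
        (hasDerivAt_omega3 (hz2 s) (hz5 s))).sub (hasDerivAt_omega3 (hz3 s) (hz4 s))
      rwa [galg4 (z₁ s) (z₂ s) (z₃ s) (z₄ s) (z₅ s)] at H
    rw [constant_of_hasDerivAt_zero h t]; exact hc4
  have hg5 : -omega3 (z₁ t) (z₄ t) + omega3 (z₂ t) (z₄ t) + omega3 (z₃ t) (z₅ t) = 0 := by
    have h : ∀ s, HasDerivAt
        (fun r => -omega3 (z₁ r) (z₄ r) + omega3 (z₂ r) (z₄ r) + omega3 (z₃ r) (z₅ r)) 0 s := by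
      intro s
      have H := (((hasDerivAt_omega3 (hz1 s) (hz4 s)).neg).add
        (hasDerivAt_omega3 (hz2 s) (hz4 s))).add (hasDerivAt_omega3 (hz3 s) (hz5 s))
      rwa [galg5 (z₁ s) (z₂ s) (z₃ s) (z₄ s) (z₅ s)] at H
    rw [constant_of_hasDerivAt_zero h t]; exact hc5
  have hg6 : omega3 (z₄ t) (z₅ t) = 0 := by
    have h : ∀ s, HasDerivAt (fun r => omega3 (z₄ r) (z₅ r)) 0 s := by
      intro s
      have := hasDerivAt_omega3 (hz4 s) (hz5 s)
      rwa [galg6 (z₁ s) (z₂ s) (z₃ s) (z₄ s) (z₅ s)] at this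
    rw [constant_of_hasDerivAt_zero h t]; exact hc6
  refine ⟨?_, ?_, ?_, ?_⟩
  · rw [hdU, hdV, hUdef, hVdef, omega3_tangent, hg1, hg2, hg3, hg4, hg5, hg6]
    ring
  · rw [hdU, hdT, omega3_cross_left]
  · rw [hdV, hdT, omega3_cross_right]
  · rw [hdU, hdV, hdT, Omega3_cross_im]
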